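/- Let X be a Banach space with operators A and (B_n) and iterates x_n = B_{n-1}(x_n) for n ≥ 1. Suppose: each B_n is M_n-Lipschitz; A and each B_n are differentiable with K-Lipschitz and K_n-Lipschitz derivatives respectively on a convex set containing all iterates; ‖A(x_n) − B_n(x_n)‖ ≤ ε_n for all n; and ‖A'(x_{n-1}) − B'_{n-1}(x_{n-1})‖ ≤ σ_{n-1} for all n ≥ 1. Then for all n ≥ 1, r_n ≤ M_n r_n + (1/2)(K + K_{n-1}) r_{n-1}² + σ_{n-1} r_{n-1} + ε_{n-1} + ε_n, where r_k = ‖x_{k+1} − x_k‖. -/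

import Mathlib

open Set

lemma taylor_quad {X : Type*} [NormedAddCommGroup X] [NormedSpace ℝ X]
    {f : X → X} {f' : X → X →L[ℝ] X} {S : Set X} {K : ℝ} (hK : 0 ≤ K)
    (hS : Convex ℝ S)
    (hf : ∀ z ∈ S, HasFDerivWithinAt f (f' z) S z)
    (hLip : ∀ z ∈ S, ∀ w ∈ S, ‖f' z - f' w‖ ≤ K * ‖z - w‖)
    {x y : X} (hx : x ∈ S) (hy : y ∈ S) :
    ‖f y - f x - f' x (y - x)‖ ≤ K / 2 * ‖y - x‖ ^ 2 := by
  set γ : ℝ → X := fun t => x + t • (y - x) with hγ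
  have hγS : ∀ t ∈ Icc (0:ℝ) 1, γ t ∈ S := by
    intro t ht
    have : γ t = (1 - t) • x + t • y := by simp [hγ]; module
    rw [this]
    exact hS hx hy (by linarith [ht.2]) ht.1 (by ring)
  set h : ℝ → X := fun t => f (γ t) - f x - t • (f' x (y - x)) with hh
  have hd : ∀ t ∈ Icc (0:ℝ) 1,
      HasDerivWithinAt h (f' (γ t) (y - x) - f' x (y - x)) (Icc 0 1) t := by
    intro t ht
    have hγd : HasDerivAt γ (y - x) t := by
      rw [hγ]; simpa using ((hasDerivAt_id t).smul_const (y - x)).const_add x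
    have h1 : HasDerivWithinAt (fun t => f (γ t)) (f' (γ t) (y - x)) (Icc 0 1) t :=
      (hf (γ t) (hγS t ht)).comp_hasDerivWithinAt t hγd.hasDerivWithinAt hγS
    rw [hh]; have := (h1.sub_const (f x)).sub ((hasDerivWithinAt_id t _).smul_const (f' x (y - x)))
    simp only [one_smul] at this; exact this
  have hcont : ContinuousOn h (Icc 0 1) := fun t ht => (hd t ht).continuousWithinAt
  set B : ℝ → ℝ := fun t => K / 2 * ‖y - x‖ ^ 2 * t ^ 2 with hB
  have hBd : ∀ t : ℝ, HasDerivAt B (K * ‖y - x‖ ^ 2 * t) t := by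
    intro t
    have := (hasDerivAt_pow 2 t).const_mul (K / 2 * ‖y - x‖ ^ 2)
    rw [hB]; refine this.congr_deriv ?_
    ring
  have key := image_norm_le_of_norm_deriv_right_le_deriv_boundary hcont
    (fun t ht => (hd t (Ico_subset_Icc_self ht)).mono_of_mem_nhdsWithin
      (Icc_mem_nhdsGE_of_mem ht))
    (by simp [hh, hB, hγ]) hBd ?_ (right_mem_Icc.2 zero_le_one)
  · have h1 : h 1 = f y - f x - f' x (y - x) := by simp [hh, hγ]
    have hB1 : B 1 = K / 2 * ‖y - x‖ ^ 2 := by simp [hB]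
    rwa [h1, hB1] at key
  · intro t ht
    have : f' (γ t) (y - x) - f' x (y - x) = (f' (γ t) - f' x) (y - x) := by simp
    rw [this]
    calc ‖(f' (γ t) - f' x) (y - x)‖ ≤ ‖f' (γ t) - f' x‖ * ‖y - x‖ :=
          ContinuousLinearMap.le_opNorm _ _
      _ ≤ (K * ‖γ t - x‖) * ‖y - x‖ :=
          mul_le_mul_of_nonneg_right (hLip _ (hγS t (Ico_subset_Icc_self ht)) _ hx)
            (norm_nonneg _)
      _ = K * ‖y - x‖ ^ 2 * t := by
          have : γ t - x = t • (y - x) := by simp [hγ]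
          rw [this, norm_smul, Real.norm_of_nonneg ht.1]; ring


/-- Newton–Kantorovich type estimate with perturbations:
r_n ≤ M_n r_n + (1/2)(K + K_{n−1}) r_{n−1}² + σ_{n−1} r_{n−1} + ε_{n−1} + ε_n. -/
theorem stmt_6 {X : Type*} [NormedAddCommGroup X] [NormedSpace ℝ X] [CompleteSpace X]
    (A : X → X) (B : ℕ → X → X) (A' : X → X →L[ℝ] X) (B' : ℕ → X → X →L[ℝ] X)
    (x : ℕ → X) (S : Set X)
    (K : ℝ) (Mn Kn εn σn : ℕ → ℝ)
    (hK : 0 ≤ K) (hMn : ∀ n, 0 ≤ Mn n) (hKn : ∀ n, 0 ≤ Kn n)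
    (hεn : ∀ n, 0 ≤ εn n) (hσn : ∀ n, 0 ≤ σn n)
    (hS : Convex ℝ S) (hxS : ∀ n, x n ∈ S)
    (hfix : ∀ n : ℕ, 1 ≤ n → x n = B (n - 1) (x n))
    (hBLip : ∀ n, ∀ x' ∈ S, ∀ y ∈ S, ‖B n x' - B n y‖ ≤ Mn n * ‖x' - y‖)
    (hA : ∀ x' ∈ S, HasFDerivWithinAt A (A' x') S x')
    (hB : ∀ n, ∀ x' ∈ S, HasFDerivWithinAt (B n) (B' n x') S x')
    (hA'Lip : ∀ x' ∈ S, ∀ y ∈ S, ‖A' x' - A' y‖ ≤ K * ‖x' - y‖)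
    (hB'Lip : ∀ n, ∀ x' ∈ S, ∀ y ∈ S, ‖B' n x' - B' n y‖ ≤ Kn n * ‖x' - y‖)
    (happrox : ∀ n, ‖A (x n) - B n (x n)‖ ≤ εn n)
    (hσ : ∀ n : ℕ, 1 ≤ n → ‖A' (x (n - 1)) - B' (n - 1) (x (n - 1))‖ ≤ σn (n - 1)) :
    ∀ n : ℕ, 1 ≤ n →
      ‖x (n + 1) - x n‖ ≤ Mn n * ‖x (n + 1) - x n‖
        + (1 / 2) * (K + Kn (n - 1)) * ‖x n - x (n - 1)‖ ^ 2
        + σn (n - 1) * ‖x n - x (n - 1)‖ + εn (n - 1) + εn n := by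
  rintro n hn
  obtain ⟨m, rfl⟩ : ∃ m, n = m + 1 := ⟨n - 1, by omega⟩
  simp only [Nat.add_sub_cancel]
  set p := x m with hp
  set q := x (m + 1) with hq
  set s := x (m + 2) with hs
  have hfix1 : q = B m q := by
    have := hfix (m + 1) (by omega); simpa using this
  have hfix2 : s = B (m + 1) s := by
    have := hfix (m + 2) (by omega); simpa using this
  have hσm : ‖A' p - B' m p‖ ≤ σn m := by
    have := hσ (m + 1) (by omega); simpa using this
  -- Taylor estimates
  have hTA : ‖A q - A p - A' p (q - p)‖ ≤ K / 2 * ‖q - p‖ ^ 2 :=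
    taylor_quad hK hS hA hA'Lip (hxS m) (hxS (m + 1))
  have hTB : ‖B m q - B m p - B' m p (q - p)‖ ≤ Kn m / 2 * ‖q - p‖ ^ 2 :=
    taylor_quad (hKn m) hS (hB m) (hB'Lip m) (hxS m) (hxS (m + 1))
  -- middle term
  have hmid : ‖(A' p - B' m p) (q - p)‖ ≤ σn m * ‖q - p‖ :=
    le_trans (ContinuousLinearMap.le_opNorm _ _)
      (mul_le_mul_of_nonneg_right hσm (norm_nonneg _))
  -- key bound on ‖A q - B m q‖
  have hkey : ‖A q - B m q‖ ≤ K / 2 * ‖q - p‖ ^ 2 + Kn m / 2 * ‖q - p‖ ^ 2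
      + σn m * ‖q - p‖ + εn m := by
    have hdecomp : A q - B m q = (A q - A p - A' p (q - p))
        - (B m q - B m p - B' m p (q - p)) + (A' p - B' m p) (q - p)
        + (A p - B m p) := by
      simp only [ContinuousLinearMap.sub_apply]
      abel
    rw [hdecomp]
    calc ‖(A q - A p - A' p (q - p)) - (B m q - B m p - B' m p (q - p))
          + (A' p - B' m p) (q - p) + (A p - B m p)‖
        ≤ ‖(A q - A p - A' p (q - p)) - (B m q - B m p - B' m p (q - p))
          + (A' p - B' m p) (q - p)‖ + ‖A p - B m p‖ := norm_add_le _ _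
      _ ≤ (‖(A q - A p - A' p (q - p)) - (B m q - B m p - B' m p (q - p))‖
          + ‖(A' p - B' m p) (q - p)‖) + ‖A p - B m p‖ := by
          gcongr; exact norm_add_le _ _
      _ ≤ ((‖A q - A p - A' p (q - p)‖ + ‖B m q - B m p - B' m p (q - p)‖)
          + ‖(A' p - B' m p) (q - p)‖) + ‖A p - B m p‖ := by
          gcongr; exact norm_sub_le _ _
      _ ≤ K / 2 * ‖q - p‖ ^ 2 + Kn m / 2 * ‖q - p‖ ^ 2 + σn m * ‖q - p‖ + εn m := by
          exact add_le_add (add_le_add (add_le_add hTA hTB) hmid) (happrox m)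
  -- assemble
  have hstep : ‖s - q‖ ≤ Mn (m + 1) * ‖s - q‖ + ‖B (m + 1) q - q‖ := by
    calc ‖s - q‖ = ‖(B (m + 1) s - B (m + 1) q) + (B (m + 1) q - q)‖ := by
          rw [← hfix2]; abel_nf
      _ ≤ ‖B (m + 1) s - B (m + 1) q‖ + ‖B (m + 1) q - q‖ := norm_add_le _ _
      _ ≤ Mn (m + 1) * ‖s - q‖ + ‖B (m + 1) q - q‖ := by
          gcongr
          exact hBLip (m + 1) s (hxS (m + 2)) q (hxS (m + 1))
  have hmiddle : ‖B (m + 1) q - q‖ ≤ εn (m + 1) + ‖A q - B m q‖ := by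
    calc ‖B (m + 1) q - q‖ = ‖(B (m + 1) q - A q) + (A q - B m q)‖ := by
          nth_rewrite 2 [hfix1]; abel_nf
      _ ≤ ‖B (m + 1) q - A q‖ + ‖A q - B m q‖ := norm_add_le _ _
      _ ≤ εn (m + 1) + ‖A q - B m q‖ := by
          gcongr
          rw [norm_sub_rev]; exact happrox (m + 1)
  calc ‖s - q‖ ≤ Mn (m + 1) * ‖s - q‖ + ‖B (m + 1) q - q‖ := hstep
    _ ≤ Mn (m + 1) * ‖s - q‖ + (εn (m + 1) + (K / 2 * ‖q - p‖ ^ 2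
        + Kn m / 2 * ‖q - p‖ ^ 2 + σn m * ‖q - p‖ + εn m)) := by
        gcongr
        exact hmiddle.trans (by gcongr)
    _ = Mn (m + 1) * ‖s - q‖ + 1 / 2 * (K + Kn m) * ‖q - p‖ ^ 2
        + σn m * ‖q - p‖ + εn m + εn (m + 1) := by ring
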